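/- Let F_l, F_r : ℝ → Bool and suppose the pair is not one-directional, i.e. neither (for all v > 0, F_l(v) = true and F_r(v) = false) nor (for all v > 0, F_r(v) = true and F_l(v) = false) holds. Then for every ε ∈ (0,1) there exist L > 0 and a finite multiset M of intervals, all of length L, with opt(M) = 2, such that when the elements of M arrive in uniformly random order, the final solution of the memoryless algorithm A_{F_l,F_r} has cardinality at most 1 with probability at least 1 − ε. (That is, every deterministic memoryless algorithm that is not one-directional can be forced to competitive ratio at least 2 for unweighted single-length interval selection under random-order arrivals.) -/

import Mathlib

open scoped Classical

/-- An interval: a pair `(s, f)` of reals with `s < f`, identified with `[s, f) ⊆ ℝ`. -/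
structure Ivl where
  s : ℝ
  f : ℝ
  lt : s < f

namespace Ivl

noncomputable instance : DecidableEq Ivl := fun a b =>
  decidable_of_iff (a.s = b.s ∧ a.f = b.f) (by cases a; cases b; simp)

/-- The set of points covered by an interval. -/
def toSet (I : Ivl) : Set ℝ := Set.Ico I.s I.f

/-- The length of an interval. -/
def length (I : Ivl) : ℝ := I.f - I.s

/-- Two intervals conflict if their point sets intersect. -/
def Conflict (I J : Ivl) : Prop := (I.toSet ∩ J.toSet).Nonempty

/-- A finite set of intervals is feasible (pairwise disjoint) if no two distinct members
conflict. -/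
def Feasible (S : Finset Ivl) : Prop :=
  ∀ I ∈ S, ∀ J ∈ S, I ≠ J → ¬ Conflict I J

end Ivl

/-- `optM M` is the maximum cardinality of a pairwise-disjoint finite set of intervals all of
which occur in the multiset `M`. -/
noncomputable def optM (M : Multiset Ivl) : ℕ :=
  (M.toFinset.powerset.filter (fun T => Ivl.Feasible T)).sup Finset.card

/-- One step of the deterministic memoryless algorithm `A_{F_l, F_r}` on single-length
instances: on arrival of `I`, let `C` be the set of currently scheduled intervals conflicting
with `I`.  If `C = ∅`, take `I`.  If `C = {J}` and `I` overlaps `J` on the left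
(`I.s < J.s`, overlap `I.f - J.s`), replace `J` by `I` iff `F_l` of the overlap is `true`;
if `I` overlaps `J` on the right (`J.s < I.s`, overlap `J.f - I.s`), replace iff `F_r` of
the overlap is `true`.  In all other cases (identical interval, or two or more conflicts)
leave the solution unchanged. -/
noncomputable def memStep (Fl Fr : ℝ → Bool) (S : Finset Ivl) (I : Ivl) : Finset Ivl :=
  let C := S.filter (fun J => Ivl.Conflict J I)
  if C = ∅ then insert I S
  else if hC : ∃ J : Ivl, C = {J} then
    let J := hC.choose
    if I.s < J.s then (if Fl (I.f - J.s) then insert I (S.erase J) else S)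
    else if J.s < I.s then (if Fr (J.f - I.s) then insert I (S.erase J) else S)
    else S
  else S

/-- The memoryless algorithm `A_{F_l, F_r}` run on a list of arrivals. -/
noncomputable def memRun (Fl Fr : ℝ → Bool) (σ : List Ivl) : Finset Ivl :=
  σ.foldl (memStep Fl Fr) ∅


lemma conflict_iff (I J : Ivl) : Ivl.Conflict I J ↔ I.s < J.f ∧ J.s < I.f := by
  unfold Ivl.Conflict Ivl.toSet
  rw [Set.Ico_inter_Ico, Set.nonempty_Ico, max_lt_iff, lt_min_iff, lt_min_iff]
  have h1 := I.lt; have h2 := J.lt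
  constructor
  · rintro ⟨⟨-, h⟩, ⟨h', -⟩⟩; exact ⟨h, h'⟩
  · rintro ⟨h, h'⟩; exact ⟨⟨h1, h⟩, ⟨h', h2⟩⟩

lemma conflict_comm {I J : Ivl} (h : Ivl.Conflict I J) : Ivl.Conflict J I := by
  rw [conflict_iff] at h ⊢; exact ⟨h.2, h.1⟩

lemma conflict_self (I : Ivl) : Ivl.Conflict I I := by
  rw [conflict_iff]; exact ⟨I.lt, I.lt⟩

lemma memStep_empty (Fl Fr : ℝ → Bool) (I : Ivl) : memStep Fl Fr ∅ I = {I} := by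
  unfold memStep; simp

section single
variable (Fl Fr : ℝ → Bool) {I J : Ivl}

lemma memStep_single_eval (h : Ivl.Conflict J I) :
    memStep Fl Fr {J} I =
      (if I.s < J.s then (if Fl (I.f - J.s) then {I} else {J})
       else if J.s < I.s then (if Fr (J.f - I.s) then {I} else {J})
       else {J}) := by
  unfold memStep
  have hfil : ({J} : Finset Ivl).filter (fun K => Ivl.Conflict K I) = {J} := by
    rw [Finset.filter_eq_self]; intro K hK
    rw [Finset.mem_singleton] at hK; subst hK; exact h
  simp only [hfil]
  have hne : ({J} : Finset Ivl) ≠ ∅ := Finset.singleton_ne_empty J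
  rw [if_neg hne]
  have hEx : ∃ K : Ivl, ({J} : Finset Ivl) = {K} := ⟨J, rfl⟩
  rw [dif_pos hEx]
  have hchoose : hEx.choose = J := by
    have := hEx.choose_spec
    exact (Finset.singleton_injective this.symm)
  rw [hchoose]
  simp [Finset.erase_singleton]

lemma memStep_single_noconf (h : ¬ Ivl.Conflict J I) :
    memStep Fl Fr {J} I = insert I {J} := by
  unfold memStep
  have hfil : ({J} : Finset Ivl).filter (fun K => Ivl.Conflict K I) = ∅ := by
    rw [Finset.filter_eq_empty_iff]; intro K hK
    rw [Finset.mem_singleton] at hK; subst hK; exact h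
  simp only [hfil, if_true, eq_self_iff_true]

lemma memStep_dup : memStep Fl Fr {J} J = {J} := by
  rw [memStep_single_eval Fl Fr (conflict_self J), if_neg (lt_irrefl _), if_neg (lt_irrefl _)]

end single

lemma optM_eq_two (X Y Z : Ivl) (k : ℕ) (hk : k ≠ 0)
    (hXY : ¬ Ivl.Conflict X Y) (hXZ : Ivl.Conflict X Z) (hYZ : Ivl.Conflict Y Z)
    (hXneY : X ≠ Y) (hXneZ : X ≠ Z) (hYneZ : Y ≠ Z) :
    optM ((X :: Y :: List.replicate k Z : List Ivl) : Multiset Ivl) = 2 := by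
  have htf : ((X :: Y :: List.replicate k Z : List Ivl) : Multiset Ivl).toFinset
      = insert X (insert Y {Z}) := by
    simp [List.toFinset_replicate_of_ne_zero, hk]
  have hucard : (insert X (insert Y ({Z} : Finset Ivl))).card = 3 := by
    rw [Finset.card_insert_of_notMem (by simp [hXneY, hXneZ]),
      Finset.card_insert_of_notMem (by simp [hYneZ]), Finset.card_singleton]
  unfold optM
  rw [htf]
  apply le_antisymm
  · apply Finset.sup_le
    intro T hT
    rw [Finset.mem_filter, Finset.mem_powerset] at hT
    obtain ⟨hsub, hfeas⟩ := hT
    by_contra hgt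
    push_neg at hgt
    have hTeq : T = insert X (insert Y {Z}) :=
      Finset.eq_of_subset_of_card_le hsub (by omega)
    have hX : X ∈ T := by rw [hTeq]; simp
    have hZ : Z ∈ T := by rw [hTeq]; simp
    exact hfeas X hX Z hZ hXneZ hXZ
  · have hmem : ({X, Y} : Finset Ivl) ∈
        (insert X (insert Y ({Z} : Finset Ivl))).powerset.filter (fun T => Ivl.Feasible T) := by
      rw [Finset.mem_filter, Finset.mem_powerset]
      refine ⟨?_, ?_⟩
      · intro a ha; simp at ha ⊢; tauto
      · intro I hI J hJ hne
        simp only [Finset.mem_insert, Finset.mem_singleton] at hI hJ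
        rcases hI with rfl | rfl <;> rcases hJ with rfl | rfl
        · exact absurd rfl hne
        · exact hXY
        · exact fun hc => hXY (conflict_comm hc)
        · exact absurd rfl hne
    have := Finset.le_sup (f := Finset.card) hmem
    rwa [Finset.card_insert_of_notMem (by simp [hXneY]), Finset.card_singleton] at this

open scoped Classical
open Finset Equiv

lemma fiber1_const (n : ℕ) (t a b : Fin n) :
    (univ.filter fun π : Perm (Fin n) => π t = a).card
      = (univ.filter fun π : Perm (Fin n) => π t = b).card := by
  apply Finset.card_bij' (fun π _ => Equiv.swap a b * π) (fun π _ => Equiv.swap a b * π)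
  · intro π hπ
    simp only [mem_filter, mem_univ, true_and] at hπ ⊢
    simp [hπ]
  · intro π hπ
    simp only [mem_filter, mem_univ, true_and] at hπ ⊢
    simp [hπ, Equiv.swap_apply_right]
  · intro π hπ
    simp [← mul_assoc]
  · intro π hπ
    simp [← mul_assoc]

lemma fiber1_card (n : ℕ) (t a : Fin n) :
    (univ.filter fun π : Perm (Fin n) => π t = a).card * n = n.factorial := by
  have h := Finset.card_eq_sum_card_fiberwise
    (f := fun π : Perm (Fin n) => π t) (s := univ) (t := univ) (fun x _ => mem_univ _)
  rw [Finset.card_univ, Fintype.card_perm, Fintype.card_fin] at h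
  rw [Finset.sum_congr rfl (fun b _ => (fiber1_const n t b a))] at h
  rw [Finset.sum_const, Finset.card_univ, Fintype.card_fin, smul_eq_mul] at h
  rw [mul_comm] at h
  exact h.symm

lemma exists_perm_pair {n : ℕ} {a b a' b' : Fin n} (h : a ≠ b) (h' : a' ≠ b') :
    ∃ τ : Perm (Fin n), τ a = a' ∧ τ b = b' := by
  refine ⟨Equiv.swap (Equiv.swap a a' b) b' * Equiv.swap a a', ?_, ?_⟩
  · have hc : a' ≠ Equiv.swap a a' b := by
      intro hh
      have := congrArg (Equiv.swap a a') hh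
      rw [Equiv.swap_apply_right, Equiv.swap_apply_self] at this
      exact h this
    simp only [Perm.mul_apply, Equiv.swap_apply_left]
    exact Equiv.swap_apply_of_ne_of_ne hc h'
  · simp only [Perm.mul_apply]
    exact Equiv.swap_apply_left _ _

lemma fiber2_const {n : ℕ} (t u : Fin n) {a b a' b' : Fin n} (h : a ≠ b) (h' : a' ≠ b') :
    (univ.filter fun π : Perm (Fin n) => π t = a ∧ π u = b).card
      = (univ.filter fun π : Perm (Fin n) => π t = a' ∧ π u = b').card := by
  obtain ⟨τ, hτa, hτb⟩ := exists_perm_pair h h'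
  apply Finset.card_bij' (fun π _ => τ * π) (fun π _ => τ⁻¹ * π)
  · intro π hπ
    simp only [mem_filter, mem_univ, true_and] at hπ ⊢
    simp [hπ.1, hπ.2, hτa, hτb]
  · intro π hπ
    simp only [mem_filter, mem_univ, true_and] at hπ ⊢
    constructor
    · simp only [Perm.mul_apply, hπ.1, ← hτa, Equiv.Perm.inv_def, Equiv.symm_apply_apply]
    · simp only [Perm.mul_apply, hπ.2, ← hτb, Equiv.Perm.inv_def, Equiv.symm_apply_apply]
  · intro π hπ; simp [← mul_assoc]
  · intro π hπ; simp [← mul_assoc]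

lemma fiber2_card {n : ℕ} {t u a b : Fin n} (htu : t ≠ u) (hab : a ≠ b) :
    (univ.filter fun π : Perm (Fin n) => π t = a ∧ π u = b).card * (n * n - n)
      = n.factorial := by
  have h := Finset.card_eq_sum_card_fiberwise
    (f := fun π : Perm (Fin n) => (π t, π u)) (s := univ) (t := univ.offDiag)
    (fun π _ => by
      rw [Finset.mem_coe, Finset.mem_offDiag]
      exact ⟨mem_univ _, mem_univ _, fun hh => htu (π.injective hh)⟩)
  rw [Finset.card_univ, Fintype.card_perm, Fintype.card_fin] at h
  have hco : ∀ p ∈ univ.offDiag,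
      (univ.filter fun π : Perm (Fin n) => (π t, π u) = p).card
        = (univ.filter fun π : Perm (Fin n) => π t = a ∧ π u = b).card := by
    intro p hp
    rw [Finset.mem_offDiag] at hp
    rw [Finset.filter_congr (fun (π : Perm (Fin n)) (_ : π ∈ univ) =>
      (Prod.ext_iff : (π t, π u) = p ↔ π t = p.1 ∧ π u = p.2))]
    exact fiber2_const t u hp.2.2 hab
  rw [Finset.sum_congr rfl hco, Finset.sum_const, smul_eq_mul,
    Finset.offDiag_card, Finset.card_univ, Fintype.card_fin] at h
  rw [mul_comm] at h
  exact h.symm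
lemma foldl_fixed (Fl Fr : ℝ → Bool) (S : Finset Ivl) :
    ∀ (l : List Ivl), (∀ x ∈ l, memStep Fl Fr S x = S) →
      List.foldl (memStep Fl Fr) S l = S := by
  intro l
  induction l with
  | nil => intro _; rfl
  | cons y t ih =>
    intro h
    rw [List.foldl_cons, h y List.mem_cons_self]
    exact ih (fun x hx => h x (List.mem_cons_of_mem _ hx))

section ConsI
variable {Fl Fr : ℝ → Bool} {v u : ℝ} (hv : 0 < v) (hu : 0 < u)

-- P1 = [0, u+v), P2 = [u+v, 2(u+v)), M = [u, u + (u+v))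
private noncomputable def P1 (v u : ℝ) (hv : 0 < v) (hu : 0 < u) : Ivl :=
  ⟨0, u + v, by linarith⟩
private noncomputable def P2 (v u : ℝ) (hv : 0 < v) (hu : 0 < u) : Ivl :=
  ⟨u + v, 2 * (u + v), by linarith⟩
private noncomputable def MI (v u : ℝ) (hv : 0 < v) (hu : 0 < u) : Ivl :=
  ⟨u, u + (u + v), by linarith⟩

lemma stepI_P1 (hFl : Fl v = false) : memStep Fl Fr {MI v u hv hu} (P1 v u hv hu) = {MI v u hv hu} := by
  have hconf : Ivl.Conflict (MI v u hv hu) (P1 v u hv hu) := by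
    rw [conflict_iff]; constructor <;> (simp only [MI, P1]; linarith)
  rw [memStep_single_eval Fl Fr hconf]
  rw [if_pos (by simp only [MI, P1]; linarith)]
  have : (P1 v u hv hu).f - (MI v u hv hu).s = v := by simp only [MI, P1]; ring
  rw [this, hFl]
  simp

lemma stepI_P2 (hFr : Fr u = false) : memStep Fl Fr {MI v u hv hu} (P2 v u hv hu) = {MI v u hv hu} := by
  have hconf : Ivl.Conflict (MI v u hv hu) (P2 v u hv hu) := by
    rw [conflict_iff]; constructor <;> (simp only [MI, P2]; linarith)
  rw [memStep_single_eval Fl Fr hconf]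
  rw [if_neg (by simp only [MI, P2]; push_neg; linarith)]
  rw [if_pos (by simp only [MI, P2]; linarith)]
  have : (MI v u hv hu).f - (P2 v u hv hu).s = u := by simp only [MI, P2]; ring
  rw [this, hFr]
  simp

lemma runI (hFl : Fl v = false) (hFr : Fr u = false) (l : List Ivl)
    (hmem : ∀ x ∈ l, x = P1 v u hv hu ∨ x = P2 v u hv hu ∨ x = MI v u hv hu) :
    List.foldl (memStep Fl Fr) {MI v u hv hu} l = {MI v u hv hu} := by
  apply foldl_fixed
  intro x hx
  rcases hmem x hx with rfl | rfl | rfl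
  · exact stepI_P1 hv hu hFl
  · exact stepI_P2 hv hu hFr
  · exact memStep_dup Fl Fr

end ConsI

section ConsII
variable {Fl Fr : ℝ → Bool} {v : ℝ} (hv : 0 < v)

-- A = [0, 2v), C = [v, 3v), B = [2v, 4v)
private noncomputable def AII (v : ℝ) (hv : 0 < v) : Ivl := ⟨0, 2 * v, by linarith⟩
private noncomputable def CII (v : ℝ) (hv : 0 < v) : Ivl := ⟨v, 3 * v, by linarith⟩
private noncomputable def BII (v : ℝ) (hv : 0 < v) : Ivl := ⟨2 * v, 4 * v, by linarith⟩

/-- `noAdj x y`: the pair (x, y) is not (A, B) or (B, A). -/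
def noAdj (v : ℝ) (hv : 0 < v) (x y : Ivl) : Prop :=
  ¬(x = AII v hv ∧ y = BII v hv) ∧ ¬(x = BII v hv ∧ y = AII v hv)

lemma stepII_CA (hFl : Fl v = true) :
    memStep Fl Fr {CII v hv} (AII v hv) = {AII v hv} := by
  have hconf : Ivl.Conflict (CII v hv) (AII v hv) := by
    rw [conflict_iff]; constructor <;> (simp only [CII, AII]; linarith)
  rw [memStep_single_eval Fl Fr hconf, if_pos (by simp only [CII, AII]; linarith)]
  have : (AII v hv).f - (CII v hv).s = v := by simp only [CII, AII]; ring
  rw [this, hFl]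
  simp

lemma stepII_CB (hFr : Fr v = true) :
    memStep Fl Fr {CII v hv} (BII v hv) = {BII v hv} := by
  have hconf : Ivl.Conflict (CII v hv) (BII v hv) := by
    rw [conflict_iff]; constructor <;> (simp only [CII, BII]; linarith)
  rw [memStep_single_eval Fl Fr hconf, if_neg (by simp only [CII, BII]; push_neg; linarith),
    if_pos (by simp only [CII, BII]; linarith)]
  have : (CII v hv).f - (BII v hv).s = v := by simp only [CII, BII]; ring
  rw [this, hFr]
  simp

lemma stepII_AC (hFr : Fr v = true) :
    memStep Fl Fr {AII v hv} (CII v hv) = {CII v hv} := by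
  have hconf : Ivl.Conflict (AII v hv) (CII v hv) := by
    rw [conflict_iff]; constructor <;> (simp only [CII, AII]; linarith)
  rw [memStep_single_eval Fl Fr hconf, if_neg (by simp only [CII, AII]; push_neg; linarith),
    if_pos (by simp only [CII, AII]; linarith)]
  have : (AII v hv).f - (CII v hv).s = v := by simp only [CII, AII]; ring
  rw [this, hFr]
  simp

lemma stepII_BC (hFl : Fl v = true) :
    memStep Fl Fr {BII v hv} (CII v hv) = {CII v hv} := by
  have hconf : Ivl.Conflict (BII v hv) (CII v hv) := by
    rw [conflict_iff]; constructor <;> (simp only [CII, BII]; linarith)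
  rw [memStep_single_eval Fl Fr hconf, if_pos (by simp only [CII, BII]; linarith)]
  have : (CII v hv).f - (BII v hv).s = v := by simp only [CII, BII]; ring
  rw [this, hFl]
  simp

lemma runII (hFl : Fl v = true) (hFr : Fr v = true) :
    ∀ (l : List Ivl) (x : Ivl),
      (x = AII v hv ∨ x = BII v hv ∨ x = CII v hv) →
      (∀ y ∈ l, y = AII v hv ∨ y = BII v hv ∨ y = CII v hv) →
      List.Chain' (noAdj v hv) (x :: l) →
      ∃ z, List.foldl (memStep Fl Fr) {x} l = {z} := by
  intro l
  induction l with
  | nil => exact fun x _ _ _ => ⟨x, rfl⟩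
  | cons y t ih =>
    intro x hx hmem hchain
    have hy : y = AII v hv ∨ y = BII v hv ∨ y = CII v hv :=
      hmem y List.mem_cons_self
    have hadj : noAdj v hv x y := (List.isChain_cons_cons.mp hchain).1
    have hchain' : List.Chain' (noAdj v hv) (y :: t) := (List.isChain_cons_cons.mp hchain).2
    have hmem' : ∀ z ∈ t, z = AII v hv ∨ z = BII v hv ∨ z = CII v hv :=
      fun z hz => hmem z (List.mem_cons_of_mem _ hz)
    have hstep : memStep Fl Fr {x} y = {y} := by
      rcases hx with rfl | rfl | rfl <;> rcases hy with rfl | rfl | rfl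
      · exact memStep_dup Fl Fr
      · exact absurd ⟨rfl, rfl⟩ hadj.1
      · exact stepII_AC hv hFr
      · exact absurd ⟨rfl, rfl⟩ hadj.2
      · exact memStep_dup Fl Fr
      · exact stepII_BC hv hFl
      · exact stepII_CA hv hFl
      · exact stepII_CB hv hFr
      · exact memStep_dup Fl Fr
    rw [List.foldl_cons, hstep]
    exact ih y hy hmem' hchain'

end ConsII

lemma Ivl.ne_of_s_ne {I J : Ivl} (h : I.s ≠ J.s) : I ≠ J :=
  fun hIJ => h (congrArg Ivl.s hIJ)

lemma eps_facts {ε : ℝ} (hε0 : 0 < ε) (k : ℕ) (hk : k = ⌈2/ε⌉₊ + 1) :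
    2 ≤ ε * ((k : ℝ) + 1) := by
  have h1 : (2:ℝ)/ε ≤ ⌈2/ε⌉₊ := Nat.le_ceil _
  have h2 : (2:ℝ)/ε ≤ (k:ℝ) + 1 := by
    rw [hk]; push_cast; linarith
  calc (2:ℝ) = ε * (2/ε) := by field_simp
  _ ≤ ε * ((k:ℝ) + 1) := by
    apply mul_le_mul_of_nonneg_left h2 (le_of_lt hε0)

lemma runI_card (Fl Fr : ℝ → Bool) {v u : ℝ} (hv : 0 < v) (hu : 0 < u)
    (hFl : Fl v = false) (hFr : Fr u = false) (l : List Ivl)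
    (hmem : ∀ x ∈ l, x = P1 v u hv hu ∨ x = P2 v u hv hu ∨ x = MI v u hv hu)
    (hhead : ∀ h : 0 < l.length, l[0]'h = MI v u hv hu) :
    (memRun Fl Fr l).card ≤ 1 := by
  cases l with
  | nil => simp [memRun]
  | cons x t =>
    have hx : x = MI v u hv hu := hhead (by simp)
    unfold memRun
    rw [List.foldl_cons, memStep_empty, hx,
      runI hv hu hFl hFr t (fun y hy => hmem y (List.mem_cons_of_mem _ hy))]
    simp

lemma main_I (Fl Fr : ℝ → Bool) {v u : ℝ} (hv : 0 < v) (hu : 0 < u)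
    (hFl : Fl v = false) (hFr : Fr u = false)
    (ε : ℝ) (hε : ε ∈ Set.Ioo (0 : ℝ) 1) :
    ∃ L : ℝ, 0 < L ∧ ∃ σ₀ : List Ivl,
      (∀ I ∈ σ₀, I.length = L) ∧ optM (σ₀ : Multiset Ivl) = 2 ∧
      (1 : ℝ) - ε ≤
        ((Finset.univ.filter (fun π : Equiv.Perm (Fin σ₀.length) =>
            (memRun Fl Fr (List.ofFn (fun i => σ₀.get (π i)))).card ≤ 1)).card : ℝ) /
          (Fintype.card (Equiv.Perm (Fin σ₀.length)) : ℝ) := by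
  obtain ⟨hε0, hε1⟩ := hε
  refine ⟨u + v, by linarith, ?_⟩
  set k : ℕ := ⌈2/ε⌉₊ + 1 with hk
  set σ₀ : List Ivl := P1 v u hv hu :: P2 v u hv hu :: List.replicate k (MI v u hv hu)
    with hσ₀
  have hmem_pool : ∀ x ∈ σ₀, x = P1 v u hv hu ∨ x = P2 v u hv hu ∨ x = MI v u hv hu := by
    intro x hx
    simp only [hσ₀, List.mem_cons, List.mem_replicate] at hx
    tauto
  refine ⟨σ₀, ?_, ?_, ?_⟩
  · intro I hI
    rcases hmem_pool I hI with rfl | rfl | rfl <;>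
      (simp only [Ivl.length, P1, P2, MI]; ring)
  · apply optM_eq_two _ _ _ k (by omega)
    · rw [conflict_iff]; push_neg
      intro _; simp only [P1, P2]; linarith
    · rw [conflict_iff]
      constructor <;> (simp only [P1, MI]; linarith)
    · rw [conflict_iff]
      constructor <;> (simp only [P2, MI]; linarith)
    · exact Ivl.ne_of_s_ne (by simp only [P1, P2]; linarith)
    · exact Ivl.ne_of_s_ne (by simp only [P1, MI]; linarith)
    · exact Ivl.ne_of_s_ne (by simp only [P2, MI]; linarith)
  · -- probability bound
    have hn : σ₀.length = k + 2 := by simp [hσ₀]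
    have hpos : 0 < σ₀.length := by omega
    set n := σ₀.length with hndef
    set i0 : Fin n := ⟨0, hpos⟩ with hi0
    set i1 : Fin n := ⟨1, by omega⟩ with hi1
    -- get values
    have hgetM : ∀ j : Fin n, j ≠ i0 → j ≠ i1 → σ₀.get j = MI v u hv hu := by
      intro j hj0 hj1
      rcases j with ⟨jv, hjlt⟩
      match jv, hjlt with
      | 0, h => exact absurd rfl hj0
      | 1, h => exact absurd rfl hj1
      | (m+2), h =>
        simp only [List.get_eq_getElem, hσ₀, List.getElem_cons_succ,
          List.getElem_replicate]
    -- good permutations give card ≤ 1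
    have hgood : ∀ π : Equiv.Perm (Fin n), ¬(π i0 = i0 ∨ π i0 = i1) →
        (memRun Fl Fr (List.ofFn (fun i => σ₀.get (π i)))).card ≤ 1 := by
      intro π hπ
      push_neg at hπ
      apply runI_card Fl Fr hv hu hFl hFr
      · intro x hx
        rw [List.mem_ofFn] at hx
        obtain ⟨i, hi⟩ := hx
        exact hmem_pool x (hi ▸ List.get_mem σ₀ _)
      · intro h
        simp only [List.getElem_ofFn]
        exact hgetM _ hπ.1 hπ.2
    -- counting
    have hNperm : Fintype.card (Equiv.Perm (Fin n)) = n.factorial := by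
      rw [Fintype.card_perm, Fintype.card_fin]
    have hc0 := fiber1_card n i0 i0
    have hc1 := fiber1_card n i0 i1
    set c0 := (Finset.univ.filter fun π : Equiv.Perm (Fin n) => π i0 = i0).card with hc0def
    set c1 := (Finset.univ.filter fun π : Equiv.Perm (Fin n) => π i0 = i1).card with hc1def
    have hceq : c0 = c1 := Nat.eq_of_mul_eq_mul_right (by omega) (hc0.trans hc1.symm)
    set G := (Finset.univ.filter (fun π : Equiv.Perm (Fin n) =>
        (memRun Fl Fr (List.ofFn (fun i => σ₀.get (π i)))).card ≤ 1)).card with hG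
    have hsub : (Finset.univ.filter (fun π : Equiv.Perm (Fin n) =>
          ¬(π i0 = i0 ∨ π i0 = i1))) ⊆
        (Finset.univ.filter (fun π : Equiv.Perm (Fin n) =>
          (memRun Fl Fr (List.ofFn (fun i => σ₀.get (π i)))).card ≤ 1)) := by
      apply Finset.monotone_filter_right
      intro π _ hπ
      exact hgood π hπ
    have hsplit := Finset.card_filter_add_card_filter_not
      (s := (Finset.univ : Finset (Equiv.Perm (Fin n))))
      (p := fun π => π i0 = i0 ∨ π i0 = i1)
    rw [Finset.card_univ, hNperm] at hsplit
    have hPle : (Finset.univ.filter (fun π : Equiv.Perm (Fin n) =>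
        π i0 = i0 ∨ π i0 = i1)).card ≤ c0 + c1 := by
      rw [Finset.filter_or]
      exact Finset.card_union_le _ _
    have hGge : G + (c0 + c1) ≥ n.factorial := by
      have h1 := Finset.card_le_card hsub
      omega
    -- real arithmetic
    have hnk : ((k:ℝ) + 1) ≤ (n:ℝ) := by
      have : k + 1 ≤ n := by omega
      exact_mod_cast this
    have hεn : 2 ≤ ε * (n : ℝ) :=
      le_trans (eps_facts hε0 k hk) (mul_le_mul_of_nonneg_left hnk (le_of_lt hε0))
    have hfacpos : 0 < (n.factorial : ℝ) := by
      exact_mod_cast Nat.factorial_pos n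
    have hc0R : (c0 : ℝ) * (n : ℝ) = (n.factorial : ℝ) := by exact_mod_cast hc0
    have hGgeR : (G : ℝ) ≥ (n.factorial : ℝ) - (c0 : ℝ) - (c1 : ℝ) := by
      have : (G : ℝ) + ((c0:ℝ) + (c1:ℝ)) ≥ (n.factorial : ℝ) := by exact_mod_cast hGge
      linarith
    have hnpos : (0:ℝ) < (n:ℝ) := by
      have : 0 < n := hpos
      exact_mod_cast this
    rw [hNperm, le_div_iff₀ hfacpos]
    have hc01 : (c0:ℝ) + (c1:ℝ) ≤ ε * (n.factorial : ℝ) := by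
      have hceqR : (c0:ℝ) = (c1:ℝ) := by exact_mod_cast hceq
      have hc0nonneg : (0:ℝ) ≤ (c0:ℝ) := Nat.cast_nonneg _
      have h2c : 2 * (c0:ℝ) ≤ ε * ((n:ℝ) * (c0:ℝ)) := by
        rw [← mul_assoc]
        exact mul_le_mul_of_nonneg_right hεn hc0nonneg
      rw [← hc0R]
      linarith [h2c]
    linarith

lemma runII_card (Fl Fr : ℝ → Bool) {v : ℝ} (hv : 0 < v)
    (hFl : Fl v = true) (hFr : Fr v = true) (l : List Ivl)
    (hmem : ∀ x ∈ l, x = AII v hv ∨ x = BII v hv ∨ x = CII v hv)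
    (hchain : List.Chain' (noAdj v hv) l) :
    (memRun Fl Fr l).card ≤ 1 := by
  cases l with
  | nil => simp [memRun]
  | cons x t =>
    unfold memRun
    rw [List.foldl_cons, memStep_empty]
    obtain ⟨z, hz⟩ := runII hv hFl hFr t x (hmem x List.mem_cons_self)
      (fun y hy => hmem y (List.mem_cons_of_mem _ hy)) hchain
    rw [hz]; simp

lemma main_II (Fl Fr : ℝ → Bool) {v : ℝ} (hv : 0 < v)
    (hFl : Fl v = true) (hFr : Fr v = true)
    (ε : ℝ) (hε : ε ∈ Set.Ioo (0 : ℝ) 1) :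
    ∃ L : ℝ, 0 < L ∧ ∃ σ₀ : List Ivl,
      (∀ I ∈ σ₀, I.length = L) ∧ optM (σ₀ : Multiset Ivl) = 2 ∧
      (1 : ℝ) - ε ≤
        ((Finset.univ.filter (fun π : Equiv.Perm (Fin σ₀.length) =>
            (memRun Fl Fr (List.ofFn (fun i => σ₀.get (π i)))).card ≤ 1)).card : ℝ) /
          (Fintype.card (Equiv.Perm (Fin σ₀.length)) : ℝ) := by
  obtain ⟨hε0, hε1⟩ := hε
  refine ⟨2 * v, by linarith, ?_⟩
  set k : ℕ := ⌈2/ε⌉₊ + 1 with hk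
  set σ₀ : List Ivl := AII v hv :: BII v hv :: List.replicate k (CII v hv) with hσ₀
  have hmem_pool : ∀ x ∈ σ₀, x = AII v hv ∨ x = BII v hv ∨ x = CII v hv := by
    intro x hx
    simp only [hσ₀, List.mem_cons, List.mem_replicate] at hx
    tauto
  refine ⟨σ₀, ?_, ?_, ?_⟩
  · intro I hI
    rcases hmem_pool I hI with rfl | rfl | rfl <;>
      (simp only [Ivl.length, AII, BII, CII]; ring)
  · apply optM_eq_two _ _ _ k (by omega)
    · rw [conflict_iff]; push_neg
      intro _; simp only [AII, BII]; linarith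
    · rw [conflict_iff]
      constructor <;> (simp only [AII, CII]; linarith)
    · rw [conflict_iff]
      constructor <;> (simp only [BII, CII]; linarith)
    · exact Ivl.ne_of_s_ne (by simp only [AII, BII]; linarith)
    · exact Ivl.ne_of_s_ne (by simp only [AII, CII]; linarith)
    · exact Ivl.ne_of_s_ne (by simp only [BII, CII]; linarith)
  · -- probability bound
    have hn : σ₀.length = k + 2 := by simp [hσ₀]
    have hpos : 0 < σ₀.length := by omega
    set n := σ₀.length with hndef
    haveI : NeZero n := ⟨by omega⟩
    set i0 : Fin n := ⟨0, hpos⟩ with hi0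
    set i1 : Fin n := ⟨1, by omega⟩ with hi1
    have hi01 : i0 ≠ i1 := by
      intro h
      have := congrArg Fin.val h
      simp only [hi0, hi1] at this
      omega
    -- get characterization
    have hgetA : ∀ j : Fin n, σ₀.get j = AII v hv → j = i0 := by
      intro j hj
      rcases j with ⟨jv, hjlt⟩
      match jv, hjlt with
      | 0, h => rfl
      | 1, h =>
        exfalso
        have : (BII v hv).s = (AII v hv).s := congrArg Ivl.s hj
        simp only [AII, BII] at this; linarith
      | (m+2), h =>
        exfalso
        have hc : σ₀.get ⟨m+2, h⟩ = CII v hv := by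
          simp only [List.get_eq_getElem, hσ₀, List.getElem_cons_succ,
            List.getElem_replicate]
        rw [hc] at hj
        have : (CII v hv).s = (AII v hv).s := congrArg Ivl.s hj
        simp only [AII, CII] at this; linarith
    have hgetB : ∀ j : Fin n, σ₀.get j = BII v hv → j = i1 := by
      intro j hj
      rcases j with ⟨jv, hjlt⟩
      match jv, hjlt with
      | 0, h =>
        exfalso
        have : (AII v hv).s = (BII v hv).s := congrArg Ivl.s hj
        simp only [AII, BII] at this; linarith
      | 1, h => rfl
      | (m+2), h =>
        exfalso
        have hc : σ₀.get ⟨m+2, h⟩ = CII v hv := by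
          simp only [List.get_eq_getElem, hσ₀, List.getElem_cons_succ,
            List.getElem_replicate]
        rw [hc] at hj
        have : (CII v hv).s = (BII v hv).s := congrArg Ivl.s hj
        simp only [BII, CII] at this; linarith
    -- good permutations
    have hgood : ∀ π : Equiv.Perm (Fin n),
        (∀ t : Fin n, ¬((π t = i0 ∧ π (t+1) = i1) ∨ (π t = i1 ∧ π (t+1) = i0))) →
        (memRun Fl Fr (List.ofFn (fun i => σ₀.get (π i)))).card ≤ 1 := by
      intro π hπ
      apply runII_card Fl Fr hv hFl hFr
      · intro x hx
        rw [List.mem_ofFn] at hx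
        obtain ⟨i, hi⟩ := hx
        exact hmem_pool x (hi ▸ List.get_mem σ₀ _)
      · refine List.isChain_iff_getElem.mpr ?_
        intro i hilt
        rw [List.length_ofFn] at hilt
        have hi1n : i + 1 < n := hilt
        have hin : i < n := Nat.lt_of_succ_lt hi1n
        rw [List.getElem_ofFn, List.getElem_ofFn]
        set a : Fin n := Fin.cast (List.length_ofFn (f := fun i => σ₀.get (π i)))
          ⟨i, by rw [List.length_ofFn]; exact hin⟩ with ha
        set b : Fin n := Fin.cast (List.length_ofFn (f := fun i => σ₀.get (π i)))
          ⟨i+1, by rw [List.length_ofFn]; exact hi1n⟩ with hb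
        have hav : (a : ℕ) = i := rfl
        have hbv : (b : ℕ) = i + 1 := rfl
        have hba : b = a + 1 := by
          apply Fin.ext
          rw [Fin.val_add, hav, hbv]
          have h1 : ((1 : Fin n) : ℕ) = 1 := by
            rw [Fin.val_one']
            exact Nat.mod_eq_of_lt (by omega)
          rw [h1]
          exact (Nat.mod_eq_of_lt hi1n).symm
        constructor
        · rintro ⟨hA, hB⟩
          exact hπ a (Or.inl ⟨hgetA _ hA, by rw [← hba]; exact hgetB _ hB⟩)
        · rintro ⟨hB, hA⟩
          exact hπ a (Or.inr ⟨hgetB _ hB, by rw [← hba]; exact hgetA _ hA⟩)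
    -- counting
    have hNperm : Fintype.card (Equiv.Perm (Fin n)) = n.factorial := by
      rw [Fintype.card_perm, Fintype.card_fin]
    have htne : ∀ t : Fin n, t ≠ t + 1 := by
      intro t h
      have hval := congrArg Fin.val h
      rw [Fin.val_add] at hval
      have h1 : ((1 : Fin n) : ℕ) = 1 := by
        rw [Fin.val_one']
        exact Nat.mod_eq_of_lt (by omega)
      rw [h1] at hval
      have htlt : (t : ℕ) < n := t.isLt
      rcases Nat.lt_or_ge ((t : ℕ) + 1) n with hlt | hge
      · rw [Nat.mod_eq_of_lt hlt] at hval; omega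
      · have : (t : ℕ) + 1 = n := by omega
        rw [this, Nat.mod_self] at hval; omega
    set badF : Fin n → Finset (Equiv.Perm (Fin n)) := fun t =>
      Finset.univ.filter (fun π => (π t = i0 ∧ π (t+1) = i1) ∨ (π t = i1 ∧ π (t+1) = i0))
      with hbadF
    have hbadFcard : ∀ t : Fin n, (badF t).card * (n * n - n) ≤ 2 * n.factorial := by
      intro t
      have hc1 := fiber2_card (htne t) hi01
      have hc2 := fiber2_card (htne t) (Ne.symm hi01)
      have hsplit : (badF t).card ≤
          (Finset.univ.filter (fun π : Equiv.Perm (Fin n) => π t = i0 ∧ π (t+1) = i1)).card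
          + (Finset.univ.filter (fun π : Equiv.Perm (Fin n) => π t = i1 ∧ π (t+1) = i0)).card := by
        simp only [hbadF]
        rw [Finset.filter_or]
        exact Finset.card_union_le _ _
      calc (badF t).card * (n * n - n)
          ≤ ((Finset.univ.filter (fun π : Equiv.Perm (Fin n) => π t = i0 ∧ π (t+1) = i1)).card
            + (Finset.univ.filter (fun π : Equiv.Perm (Fin n) => π t = i1 ∧ π (t+1) = i0)).card)
            * (n * n - n) := Nat.mul_le_mul_right _ hsplit
        _ = 2 * n.factorial := by rw [Nat.add_mul, hc1, hc2]; ring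
    set bad := (Finset.univ.filter (fun π : Equiv.Perm (Fin n) =>
        ∃ t : Fin n, ((π t = i0 ∧ π (t+1) = i1) ∨ (π t = i1 ∧ π (t+1) = i0)))).card
      with hbad
    have hbadsub : (Finset.univ.filter (fun π : Equiv.Perm (Fin n) =>
        ∃ t : Fin n, ((π t = i0 ∧ π (t+1) = i1) ∨ (π t = i1 ∧ π (t+1) = i0))))
        ⊆ Finset.univ.biUnion badF := by
      intro π hπ
      rw [Finset.mem_filter] at hπ
      obtain ⟨-, t, ht⟩ := hπ
      rw [Finset.mem_biUnion]
      exact ⟨t, Finset.mem_univ _, Finset.mem_filter.mpr ⟨Finset.mem_univ _, ht⟩⟩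
    have hbadbound : bad * (n * n - n) ≤ n * (2 * n.factorial) := by
      have h1 : bad ≤ ∑ t : Fin n, (badF t).card := by
        rw [hbad]
        exact le_trans (Finset.card_le_card hbadsub) (Finset.card_biUnion_le)
      calc bad * (n * n - n) ≤ (∑ t : Fin n, (badF t).card) * (n * n - n) :=
            Nat.mul_le_mul_right _ h1
        _ = ∑ t : Fin n, ((badF t).card * (n * n - n)) := by rw [Finset.sum_mul]
        _ ≤ ∑ _t : Fin n, 2 * n.factorial := Finset.sum_le_sum (fun t _ => hbadFcard t)
        _ = n * (2 * n.factorial) := by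
            rw [Finset.sum_const, Finset.card_univ, Fintype.card_fin, smul_eq_mul]
    -- split and subset
    set G := (Finset.univ.filter (fun π : Equiv.Perm (Fin n) =>
        (memRun Fl Fr (List.ofFn (fun i => σ₀.get (π i)))).card ≤ 1)).card with hG
    have hsub : (Finset.univ.filter (fun π : Equiv.Perm (Fin n) =>
          ¬ ∃ t : Fin n, ((π t = i0 ∧ π (t+1) = i1) ∨ (π t = i1 ∧ π (t+1) = i0)))) ⊆
        (Finset.univ.filter (fun π : Equiv.Perm (Fin n) =>
          (memRun Fl Fr (List.ofFn (fun i => σ₀.get (π i)))).card ≤ 1)) := by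
      apply Finset.monotone_filter_right
      intro π _ hπ
      exact hgood π (fun t ht => hπ ⟨t, ht⟩)
    have hsplit := Finset.card_filter_add_card_filter_not
      (s := (Finset.univ : Finset (Equiv.Perm (Fin n))))
      (p := fun π => ∃ t : Fin n, ((π t = i0 ∧ π (t+1) = i1) ∨ (π t = i1 ∧ π (t+1) = i0)))
    rw [Finset.card_univ, hNperm] at hsplit
    have hGge : G + bad ≥ n.factorial := by
      have h1 := Finset.card_le_card hsub
      omega
    -- real arithmetic
    have hnk : ((k:ℝ) + 1) ≤ (n:ℝ) - 1 := by
      have : k + 2 ≤ n := by omega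
      have h2 : ((k:ℝ) + 2) ≤ (n:ℝ) := by exact_mod_cast this
      linarith
    have hεn : 2 ≤ ε * ((n : ℝ) - 1) :=
      le_trans (eps_facts hε0 k hk) (mul_le_mul_of_nonneg_left hnk (le_of_lt hε0))
    have hfacpos : 0 < (n.factorial : ℝ) := by exact_mod_cast Nat.factorial_pos n
    have hn2 : (2:ℝ) ≤ (n:ℝ) := by
      have : 2 ≤ n := by omega
      exact_mod_cast this
    have hnn : n ≤ n * n := Nat.le_mul_of_pos_left n hpos
    have hbadR : (bad:ℝ) * ((n:ℝ) * (n:ℝ) - (n:ℝ)) ≤ (n:ℝ) * (2 * (n.factorial:ℝ)) := by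
      have := hbadbound
      have hcast : ((n * n - n : ℕ) : ℝ) = (n:ℝ) * (n:ℝ) - (n:ℝ) := by
        rw [Nat.cast_sub hnn]; push_cast; ring
      calc (bad:ℝ) * ((n:ℝ) * (n:ℝ) - (n:ℝ)) = ((bad * (n * n - n) : ℕ) : ℝ) := by
            push_cast [hcast]; ring
        _ ≤ ((n * (2 * n.factorial) : ℕ) : ℝ) := by exact_mod_cast this
        _ = (n:ℝ) * (2 * (n.factorial:ℝ)) := by push_cast; ring
    have hkey : (bad:ℝ) ≤ ε * (n.factorial:ℝ) := by
      have hmulpos : (0:ℝ) < (n:ℝ) * ((n:ℝ) - 1) :=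
        mul_pos (by linarith) (by linarith)
      apply le_of_mul_le_mul_right _ hmulpos
      have h2 : 2 * ((n:ℝ) * (n.factorial:ℝ)) ≤
          (ε * ((n:ℝ) - 1)) * ((n:ℝ) * (n.factorial:ℝ)) := by
        apply mul_le_mul_of_nonneg_right hεn
        positivity
      calc (bad:ℝ) * ((n:ℝ) * ((n:ℝ) - 1))
          = (bad:ℝ) * ((n:ℝ) * (n:ℝ) - (n:ℝ)) := by ring
        _ ≤ (n:ℝ) * (2 * (n.factorial:ℝ)) := hbadR
        _ = 2 * ((n:ℝ) * (n.factorial:ℝ)) := by ring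
        _ ≤ (ε * ((n:ℝ) - 1)) * ((n:ℝ) * (n.factorial:ℝ)) := h2
        _ = ε * (n.factorial:ℝ) * ((n:ℝ) * ((n:ℝ) - 1)) := by ring
    have hGgeR : (G:ℝ) ≥ (n.factorial:ℝ) - (bad:ℝ) := by
      have : (G:ℝ) + (bad:ℝ) ≥ (n.factorial:ℝ) := by exact_mod_cast hGge
      linarith
    rw [hNperm, le_div_iff₀ hfacpos]
    linarith


/-- Every deterministic memoryless algorithm `A_{F_l, F_r}` that is not one-directional can
be forced to competitive ratio at least `2` for unweighted single-length interval selection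
under random-order arrivals: for every `ε ∈ (0,1)` there are a length `L > 0` and a finite
multiset of intervals of length `L` (presented as a list `σ₀`) with optimum `2`, such that
when the elements arrive in uniformly random order the final solution of `A_{F_l, F_r}` has
at most one interval with probability at least `1 - ε`. -/
theorem not_one_directional_forced_two (Fl Fr : ℝ → Bool)
    (hnot : ¬ ((∀ v : ℝ, 0 < v → Fl v = true ∧ Fr v = false) ∨
               (∀ v : ℝ, 0 < v → Fr v = true ∧ Fl v = false)))
    (ε : ℝ) (hε : ε ∈ Set.Ioo (0 : ℝ) 1) :
    ∃ L : ℝ, 0 < L ∧ ∃ σ₀ : List Ivl,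
      (∀ I ∈ σ₀, I.length = L) ∧ optM (σ₀ : Multiset Ivl) = 2 ∧
      (1 : ℝ) - ε ≤
        ((Finset.univ.filter (fun π : Equiv.Perm (Fin σ₀.length) =>
            (memRun Fl Fr (List.ofFn (fun i => σ₀.get (π i)))).card ≤ 1)).card : ℝ) /
          (Fintype.card (Equiv.Perm (Fin σ₀.length)) : ℝ) := by
  rw [not_or] at hnot
  obtain ⟨h1, h2⟩ := hnot
  by_cases hA : ∃ v : ℝ, 0 < v ∧ Fl v = false
  · by_cases hB : ∃ u : ℝ, 0 < u ∧ Fr u = false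
    · obtain ⟨v, hv, hFl⟩ := hA
      obtain ⟨u, hu, hFr⟩ := hB
      exact main_I Fl Fr hv hu hFl hFr ε hε
    · push_neg at hB h2
      obtain ⟨w, hw, hcon⟩ := h2
      have hFrw : Fr w = true := by
        have := hB w hw
        simpa using this
      have hFlw : Fl w = true := by
        have := hcon hFrw
        simpa using this
      exact main_II Fl Fr hw hFlw hFrw ε hε
  · push_neg at hA h1
    obtain ⟨v, hv, hcon⟩ := h1
    have hFlv : Fl v = true := by
      have := hA v hv
      simpa using this
    have hFrv : Fr v = true := by
      have := hcon hFlv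
      simpa using this
    exact main_II Fl Fr hv hFlv hFrv ε hε
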